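/- arXiv:2212.14579 — 3 statements merged into one kernel-verified Lean document; each statement's English description precedes it below -/
import Mathlib

section
/- There exists a constant L ≥ 0 such that for every holomorphic function f on the unit disc Δ omitting the values 0 and 1, the spherical derivative satisfies |f'(z)|(1 − |z|²)/(1 + |f(z)|²) ≤ L for all z ∈ Δ. -/
open Metric

open Complex

open Metric Complex


lemma exists_primitive {h : ℂ → ℂ} (hd : DifferentiableOn ℂ h (ball 0 1)) :
    ∃ H : ℂ → ℂ, H 0 = 0 ∧ ∀ z ∈ ball (0:ℂ) 1, HasDerivAt H (h z) z := by
  have hball : ∀ ρ : NNReal, 0 < ρ → (ρ:ℝ) < 1 →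
      HasFPowerSeriesOnBall h (cauchyPowerSeries h 0 ρ) 0 ρ := fun ρ h0 h1 =>
    (hd.mono (closedBall_subset_ball h1)).hasFPowerSeriesOnBall h0
  set p := cauchyPowerSeries h 0 ((1:NNReal)/2) with hpdef
  have hp : ∀ ρ : NNReal, 0 < ρ → (ρ:ℝ) < 1 → HasFPowerSeriesOnBall h p 0 ρ := by
    intro ρ h0 h1
    have h2 := hball ((1:NNReal)/2) (by norm_num) (by norm_num)
    have h3 := hball ρ h0 h1
    rwa [h3.hasFPowerSeriesAt.eq_formalMultilinearSeries h2.hasFPowerSeriesAt] at h3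
  have hrad : ∀ r : NNReal, (r:ℝ) < 1 → (r : ENNReal) < p.radius := by
    intro r hr
    set ρ : NNReal := (r + 1) / 2 with hρ
    have h0 : 0 < ρ := by positivity
    have h1 : (ρ:ℝ) < 1 := by
      push_cast [hρ]; linarith
    have hle := (hp ρ h0 h1).r_le
    refine lt_of_lt_of_le (lt_of_lt_of_le ?_ hle) le_rfl
    rw [ENNReal.coe_lt_coe]
    rw [← NNReal.coe_lt_coe]
    push_cast [hρ]; linarith
  have hsum : ∀ r : NNReal, (r:ℝ) < 1 → Summable fun n => ‖p.coeff n‖ * (r:ℝ)^n := by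
    intro r hr
    simpa [FormalMultilinearSeries.norm_apply_eq_norm_coef] using
      p.summable_norm_mul_pow (hrad r hr)
  refine ⟨fun z => ∑' n, p.coeff n / ((n:ℂ)+1) * z^(n+1), ?_, ?_⟩
  · simp
  · intro z₀ hz₀
    rw [mem_ball_zero_iff] at hz₀
    set r : ℝ := (‖z₀‖ + 1) / 2 with hr
    have hr0 : 0 < r := by positivity
    have hr1 : r < 1 := by rw [hr]; linarith
    have hz₀r : ‖z₀‖ < r := by rw [hr]; linarith
    have key := hasDerivAt_tsum_of_isPreconnected
      (u := fun n => ‖p.coeff n‖ * r^n)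
      (g := fun n z => p.coeff n / ((n:ℂ)+1) * z^(n+1))
      (g' := fun n z => p.coeff n * z^n)
      (t := ball (0:ℂ) r) (y₀ := 0) (y := z₀)
      ?_ isOpen_ball (convex_ball _ _).isPreconnected ?_ ?_ (mem_ball_self hr0) ?_
      (by rwa [mem_ball_zero_iff])
    · refine key.congr_deriv ?_
      have hmem : z₀ ∈ Metric.eball (0:ℂ) (r.toNNReal : ENNReal) := by
        rw [Metric.emetric_ball_nnreal, mem_ball_zero_iff]
        rwa [Real.coe_toNNReal _ hr0.le]
      have hs := (hp r.toNNReal (by simpa using hr0) (by rwa [Real.coe_toNNReal _ hr0.le])).hasSum hmem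
      simp only [FormalMultilinearSeries.apply_eq_pow_smul_coeff, smul_eq_mul, zero_add] at hs
      rw [← hs.tsum_eq]
      exact tsum_congr fun n => by ring
    · have : (r.toNNReal : ℝ) = r := Real.coe_toNNReal _ hr0.le
      simpa [this] using hsum r.toNNReal (by rwa [this])
    · intro n y _
      have hd1 : HasDerivAt (fun z : ℂ => z^(n+1)) (((n:ℂ)+1) * y^n) y := by
        simpa using hasDerivAt_pow (n+1) y
      have := hd1.const_mul (p.coeff n / ((n:ℂ)+1))
      refine this.congr_deriv ?_
      have hne : ((n:ℂ)+1) ≠ 0 := Nat.cast_add_one_ne_zero n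
      field_simp
    · intro n y hy
      rw [mem_ball_zero_iff] at hy
      calc ‖p.coeff n * y^n‖ = ‖p.coeff n‖ * ‖y‖^n := by simp [norm_pow]
        _ ≤ ‖p.coeff n‖ * r^n := by gcongr
    · exact summable_zero.congr fun n => by simp


lemma exists_log {u : ℂ → ℂ} (hd : DifferentiableOn ℂ u (ball 0 1))
    (hne : ∀ z ∈ ball (0:ℂ) 1, u z ≠ 0) :
    ∃ v : ℂ → ℂ, v 0 = Complex.log (u 0) ∧ (∀ z ∈ ball (0:ℂ) 1, u z = Complex.exp (v z)) ∧
      ∀ z ∈ ball (0:ℂ) 1, HasDerivAt v (deriv u z / u z) z := by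
  have hd' : DifferentiableOn ℂ (deriv u) (ball 0 1) :=
    ((hd.analyticOnNhd isOpen_ball).deriv).differentiableOn
  have hdiv : DifferentiableOn ℂ (fun z => deriv u z / u z) (ball 0 1) :=
    hd'.div hd hne
  obtain ⟨H, hH0, hHd⟩ := exists_primitive hdiv
  set v : ℂ → ℂ := fun z => Complex.log (u 0) + H z with hv
  have h0mem : (0:ℂ) ∈ ball (0:ℂ) 1 := mem_ball_self one_pos
  have hvd : ∀ z ∈ ball (0:ℂ) 1, HasDerivAt v (deriv u z / u z) z := fun z hz =>
    (hHd z hz).const_add _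
  refine ⟨v, by simp [hv, hH0], ?_, hvd⟩
  have hF : ∀ z ∈ ball (0:ℂ) 1,
      HasDerivWithinAt (fun w => u w * Complex.exp (-v w)) 0 (ball 0 1) z := by
    intro z hz
    have hu : HasDerivAt u (deriv u z) z :=
      (hd.differentiableAt (isOpen_ball.mem_nhds hz)).hasDerivAt
    have he : HasDerivAt (fun w => Complex.exp (-v w))
        (Complex.exp (-v z) * -(deriv u z / u z)) z := by
      simpa using ((hvd z hz).neg).cexp
    have := hu.mul he
    have heq : deriv u z * Complex.exp (-v z) + u z * (Complex.exp (-v z) * -(deriv u z / u z))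
        = 0 := by
      field_simp [hne z hz]
      ring
    rw [heq] at this
    exact this.hasDerivWithinAt
  have hconst : ∀ z ∈ ball (0:ℂ) 1,
      u z * Complex.exp (-v z) = u 0 * Complex.exp (-v 0) := by
    intro z hz
    have := Convex.norm_image_sub_le_of_norm_hasDerivWithin_le (C := 0) hF
      (fun x _ => by simp) (convex_ball _ _) h0mem hz
    rw [zero_mul] at this
    have h2 := le_antisymm this (norm_nonneg _)
    rwa [norm_eq_zero, sub_eq_zero] at h2
  intro z hz
  have h1 : u z * Complex.exp (-v z) = 1 := by
    rw [hconst z hz]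
    simp [hv, hH0, exp_neg, Complex.exp_log (hne 0 h0mem)]
    exact mul_inv_cancel₀ (hne 0 h0mem)
  have := congrArg (· * Complex.exp (v z)) h1
  simpa [mul_assoc, ← Complex.exp_add] using this


lemma landau_core {F : ℂ → ℂ} (hd : DifferentiableOn ℂ F (ball 0 1))
    {a : ℂ} {r : ℝ} (hr : 0 < r) (hsub : ball a r ⊆ ball 0 1)
    (hbd : ∀ w ∈ ball a r, ‖deriv F w‖ ≤ 2 * ‖deriv F a‖)
    {w : ℂ} (hw : ‖w - F a‖ < r * ‖deriv F a‖ / 32) :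
    ∃ z ∈ ball (0:ℂ) 1, F z = w := by
  set d : ℂ := deriv F a with hdd
  have hdpos : 0 < ‖d‖ := by
    rcases (norm_nonneg d).lt_or_eq with h | h
    · exact h
    · exfalso; rw [← h] at hw; simp at hw
      exact (norm_nonneg _).not_gt hw
  have hamem : a ∈ ball a r := mem_ball_self hr
  have hF' : DifferentiableOn ℂ (deriv F) (ball 0 1) :=
    ((hd.analyticOnNhd isOpen_ball).deriv).differentiableOn
  have hφd : DifferentiableOn ℂ (fun z => deriv F z - d) (ball a r) :=
    (hF'.mono hsub).sub_const d
  have hmaps : Set.MapsTo (fun z => deriv F z - d) (ball a r)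
      (ball ((fun z => deriv F z - d) a) (4 * ‖d‖)) := by
    intro z hz
    simp only [sub_self, mem_ball, dist_zero_right, dist_eq_norm]
    rw [← hdd, sub_self, sub_zero]
    calc ‖deriv F z - d‖ ≤ ‖deriv F z‖ + ‖d‖ := norm_sub_le _ _
      _ ≤ 2 * ‖d‖ + ‖d‖ := by have := hbd z hz; linarith
      _ < 4 * ‖d‖ := by linarith
  have schwarz : ∀ z ∈ ball a r, ‖deriv F z - d‖ ≤ 4 * ‖d‖ / r * ‖z - a‖ := by
    intro z hz
    have := Complex.dist_le_div_mul_dist_of_mapsTo_ball hφd (hmaps.mono_right ball_subset_closedBall) hz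
    simpa [dist_eq_norm] using this
  set ρ : ℝ := r / 8 with hρ
  have hρpos : 0 < ρ := by positivity
  have hρr : ρ < r := by rw [hρ]; linarith
  have hcbsub : closedBall a ρ ⊆ ball a r := closedBall_subset_ball hρr
  have hGd : ∀ x ∈ closedBall a ρ,
      HasDerivWithinAt (fun z => F z - d * z) (deriv F x - d) (closedBall a ρ) x := by
    intro x hx
    have hx' : x ∈ ball 0 1 := hsub (hcbsub hx)
    have hF : HasDerivAt F (deriv F x) x :=
      (hd.differentiableAt (isOpen_ball.mem_nhds hx')).hasDerivAt
    have := hF.sub ((hasDerivAt_id x).const_mul d)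
    exact this.hasDerivWithinAt.congr_deriv (by simp)
  have hGbd : ∀ x ∈ closedBall a ρ, ‖deriv F x - d‖ ≤ ‖d‖ / 2 := by
    intro x hx
    have hx' : x ∈ ball a r := hcbsub hx
    have h1 := schwarz x hx'
    have h2 : ‖x - a‖ ≤ ρ := by
      rw [← dist_eq_norm]; exact mem_closedBall.mp hx
    calc ‖deriv F x - d‖ ≤ 4 * ‖d‖ / r * ‖x - a‖ := h1
      _ ≤ 4 * ‖d‖ / r * ρ := by gcongr
      _ = ‖d‖ / 2 := by rw [hρ]; field_simp; ring
  have key : ∀ z ∈ closedBall a ρ, ‖(F z - d * z) - (F a - d * a)‖ ≤ ‖d‖/2 * ‖z - a‖ :=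
    fun z hz => Convex.norm_image_sub_le_of_norm_hasDerivWithin_le hGd hGbd
      (convex_closedBall _ _) (mem_closedBall_self hρpos.le) hz
  have hsph : ∀ z ∈ sphere a ρ, r * ‖d‖ / 32 ≤ ‖F z - w‖ := by
    intro z hz
    have hz' : z ∈ closedBall a ρ := sphere_subset_closedBall hz
    have hza : ‖z - a‖ = ρ := by rw [← dist_eq_norm]; exact mem_sphere.mp hz
    have h1 : ‖(F z - d * z) - (F a - d * a)‖ ≤ ‖d‖/2 * ρ := by
      have := key z hz'; rwa [hza] at this
    have h2 : ‖d * (z - a)‖ ≤ ‖F z - F a‖ + ‖(F z - d*z) - (F a - d*a)‖ := by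
      have e : d * (z - a) = (F z - F a) - ((F z - d*z) - (F a - d*a)) := by ring
      rw [e]; exact norm_sub_le _ _
    have h4 : ‖d * (z - a)‖ = ‖d‖ * ρ := by rw [norm_mul, hza]
    have h6 : ‖F z - F a‖ ≤ ‖F z - w‖ + ‖F a - w‖ := by
      have e : F z - F a = (F z - w) - (F a - w) := by ring
      rw [e]; exact norm_sub_le _ _
    have h7 : ‖F a - w‖ < r * ‖d‖ / 32 := by rwa [norm_sub_rev] at hw
    have h8 : ‖d‖ * ρ = r * ‖d‖ / 8 := by rw [hρ]; ring
    linarith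
  by_contra hcon
  push_neg at hcon
  have hnz : ∀ z ∈ closedBall a ρ, F z - w ≠ 0 := by
    intro z hz h0
    exact hcon z (hsub (hcbsub hz)) (sub_eq_zero.mp h0)
  have hcl : closure (ball a ρ) = closedBall a ρ := closure_ball a hρpos.ne'
  have hfr : frontier (ball a ρ) = sphere a ρ := frontier_ball a hρpos.ne'
  have hsubcb : closedBall a ρ ⊆ ball 0 1 := fun x hx => hsub (hcbsub hx)
  have hFc : DiffContOnCl ℂ (fun z => (F z - w)⁻¹) (ball a ρ) := by
    constructor
    · exact (((hd.mono (fun x hx => hsub ((ball_subset_ball hρr.le) hx))).sub_const w).inv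
        (fun x hx => hnz x (ball_subset_closedBall hx)))
    · rw [hcl]
      exact (((hd.continuousOn.mono hsubcb).sub continuousOn_const).inv₀ hnz)
  have hbound := norm_le_of_forall_mem_frontier_norm_le isBounded_ball hFc
    (C := (r * ‖d‖ / 32)⁻¹) (fun z hz => by
      rw [hfr] at hz
      rw [norm_inv]
      exact inv_anti₀ (by positivity) (hsph z hz))
    (z := a) (by rw [hcl]; exact mem_closedBall_self hρpos.le)
  rw [norm_inv] at hbound
  have hFa : 0 < ‖F a - w‖ :=
    norm_pos_iff.mpr (hnz a (mem_closedBall_self hρpos.le))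
  have hX : (0:ℝ) < r * ‖d‖ / 32 := by positivity
  have : r * ‖d‖ / 32 ≤ ‖F a - w‖ := (inv_le_inv₀ hFa hX).mp hbound
  have h7 : ‖F a - w‖ < r * ‖d‖ / 32 := by rwa [norm_sub_rev] at hw
  linarith


lemma landau {F : ℂ → ℂ} (hd : DifferentiableOn ℂ F (ball 0 1)) :
    ∃ p : ℂ, ∀ w : ℂ, ‖w - p‖ < ‖deriv F 0‖ / 128 → ∃ z ∈ ball (0:ℂ) 1, F z = w := by
  by_cases h0 : deriv F 0 = 0
  · exact ⟨0, fun w hw => absurd hw (by simp [h0])⟩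
  have hd0pos : 0 < ‖deriv F 0‖ := norm_pos_iff.mpr h0
  have hF' : DifferentiableOn ℂ (deriv F) (ball 0 1) :=
    ((hd.analyticOnNhd isOpen_ball).deriv).differentiableOn
  have hK : closedBall (0:ℂ) (1/2) ⊆ ball 0 1 := closedBall_subset_ball (by norm_num)
  have h0K : (0:ℂ) ∈ closedBall (0:ℂ) (1/2) := mem_closedBall_self (by norm_num)
  have hc : ContinuousOn (fun z => ‖deriv F z‖ * (1/2 - ‖z‖)) (closedBall (0:ℂ) (1/2)) :=
    (hF'.continuousOn.mono hK).norm.mul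
      ((continuous_const.sub continuous_norm).continuousOn)
  obtain ⟨a, haK, hmax⟩ :=
    (isCompact_closedBall (0:ℂ) (1/2)).exists_isMaxOn ⟨0, h0K⟩ hc
  set m : ℝ := ‖deriv F a‖ * (1/2 - ‖a‖) with hm
  have hm0 : ‖deriv F 0‖ * (1/2) ≤ m := by
    have h : ‖deriv F 0‖ * (1/2 - ‖(0:ℂ)‖) ≤ ‖deriv F a‖ * (1/2 - ‖a‖) := hmax h0K
    rw [norm_zero, sub_zero] at h
    exact h
  have hmpos : 0 < m := lt_of_lt_of_le (by positivity) hm0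
  have ha2 : ‖a‖ < 1/2 := by
    by_contra h
    push_neg at h
    have : m ≤ 0 := mul_nonpos_of_nonneg_of_nonpos (norm_nonneg _) (by linarith)
    linarith
  set r : ℝ := (1/2 - ‖a‖)/2 with hr'
  have hr : 0 < r := by rw [hr']; linarith
  have hsub : ball a r ⊆ ball 0 1 := by
    intro x hx
    rw [mem_ball_zero_iff]
    have h1 : ‖x - a‖ < r := by rwa [mem_ball, dist_eq_norm] at hx
    calc ‖x‖ = ‖a + (x - a)‖ := by ring_nf
      _ ≤ ‖a‖ + ‖x - a‖ := norm_add_le _ _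
      _ < ‖a‖ + r := by linarith
      _ < 1 := by rw [hr']; linarith
  have hdFa : 0 < ‖deriv F a‖ := by
    rcases (norm_nonneg (deriv F a)).lt_or_eq with h | h
    · exact h
    · exfalso; rw [hm, ← h] at hmpos; simp at hmpos
  have hbd : ∀ w ∈ ball a r, ‖deriv F w‖ ≤ 2 * ‖deriv F a‖ := by
    intro w hw
    have h1 : ‖w - a‖ < r := by rwa [mem_ball, dist_eq_norm] at hw
    have hwn : ‖w‖ < ‖a‖ + r := by
      calc ‖w‖ = ‖a + (w - a)‖ := by ring_nf
        _ ≤ ‖a‖ + ‖w - a‖ := norm_add_le _ _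
        _ < ‖a‖ + r := by linarith
    have hwK : w ∈ closedBall (0:ℂ) (1/2) := by
      rw [mem_closedBall, dist_zero_right]
      rw [hr'] at hwn; linarith
    have h2 : ‖deriv F w‖ * (1/2 - ‖w‖) ≤ m := hmax hwK
    have h3 : r ≤ 1/2 - ‖w‖ := by rw [hr'] at hwn ⊢; linarith
    have h4 : m = ‖deriv F a‖ * (2*r) := by rw [hm, hr']; ring
    have h5 : ‖deriv F w‖ * r ≤ ‖deriv F a‖ * (2*r) := by
      calc ‖deriv F w‖ * r ≤ ‖deriv F w‖ * (1/2 - ‖w‖) := by gcongr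
        _ ≤ m := h2
        _ = _ := h4
    have := le_of_mul_le_mul_right (by linarith : ‖deriv F w‖ * r ≤ (2 * ‖deriv F a‖) * r) hr
    exact this
  refine ⟨F a, fun w hw => landau_core hd hr hsub hbd (lt_of_lt_of_le hw ?_)⟩
  have h4 : m = ‖deriv F a‖ * (2*r) := by rw [hm, hr']; ring
  have : ‖deriv F 0‖ / 4 ≤ r * ‖deriv F a‖ := by
    rw [h4] at hm0; linarith
  linarith


noncomputable def gridx (k : ℕ) : ℝ := Real.log (Real.sqrt (k+1) + Real.sqrt k)

lemma one_le_sqrt_succ (k : ℕ) : (1:ℝ) ≤ Real.sqrt (k+1) := by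
  have h0 : (0:ℝ) ≤ (k:ℝ) := Nat.cast_nonneg k
  have h := Real.sqrt_le_sqrt (show (1:ℝ) ≤ (k:ℝ)+1 by linarith)
  rwa [Real.sqrt_one] at h

lemma sqrtA_pos (k : ℕ) : (0:ℝ) < Real.sqrt (k+1) + Real.sqrt k := by
  have h := one_le_sqrt_succ k
  have := Real.sqrt_nonneg (k:ℝ)
  linarith

lemma gridx_zero : gridx 0 = 0 := by simp [gridx]

lemma gridx_step (k : ℕ) : gridx (k+1) ≤ gridx k + 2 := by
  have hcast : ((k+1:ℕ):ℝ) = (k:ℝ)+1 := by push_cast; ring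
  rw [gridx, gridx, hcast]
  have hA := sqrtA_pos k
  have h1 := one_le_sqrt_succ k
  have hk0 := Real.sqrt_nonneg (k:ℝ)
  have hk1 := Real.sqrt_nonneg ((k:ℝ)+1)
  have hstep : Real.sqrt ((k:ℝ)+1+1) + Real.sqrt ((k:ℝ)+1) ≤
      Real.exp 2 * (Real.sqrt ((k:ℝ)+1) + Real.sqrt k) := by
    have h2 : Real.sqrt ((k:ℝ)+1+1) ≤ Real.sqrt ((k:ℝ)+1) + 1 := by
      rw [show Real.sqrt ((k:ℝ)+1) + 1 = Real.sqrt ((Real.sqrt ((k:ℝ)+1) + 1)^2) by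
        rw [Real.sqrt_sq (by positivity)]]
      apply Real.sqrt_le_sqrt
      have h4 : Real.sqrt ((k:ℝ)+1)^2 = (k:ℝ)+1 := Real.sq_sqrt (by positivity)
      nlinarith
    have he : (3:ℝ) ≤ Real.exp 2 := by
      have := Real.add_one_le_exp (2:ℝ); linarith
    nlinarith
  have hlog := Real.log_le_log (by positivity) hstep
  rw [Real.log_mul (by positivity) (by positivity), Real.log_exp] at hlog
  linarith

lemma gridx_unbounded (x : ℝ) : ∃ k : ℕ, x < gridx k := by
  obtain ⟨k, hk⟩ := exists_nat_gt (Real.exp x ^ 2)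
  refine ⟨k, ?_⟩
  have h1 : Real.exp x < Real.sqrt (k+1) := by
    have h2 : Real.exp x ^ 2 < (k:ℝ) + 1 := by linarith
    have := Real.sqrt_lt_sqrt (by positivity) h2
    rwa [Real.sqrt_sq (Real.exp_pos x).le] at this
  have h3 : Real.exp x < Real.sqrt (k+1) + Real.sqrt k := by
    have := Real.sqrt_nonneg (k:ℝ); linarith
  calc x = Real.log (Real.exp x) := (Real.log_exp x).symm
    _ < gridx k := Real.log_lt_log (Real.exp_pos x) h3

lemma gridx_approx {x : ℝ} (hx : 0 ≤ x) : ∃ k : ℕ, |x - gridx k| ≤ 2 := by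
  have hex : ∃ k : ℕ, x < gridx k := gridx_unbounded x
  have hKlt : x < gridx (Nat.find hex) := Nat.find_spec hex
  have hKpos : Nat.find hex ≠ 0 := by
    intro h
    rw [h, gridx_zero] at hKlt; linarith
  obtain ⟨k, hk⟩ := Nat.exists_eq_succ_of_ne_zero hKpos
  have hmin : ¬ x < gridx k := Nat.find_min hex (by omega)
  push_neg at hmin
  have hstep := gridx_step k
  rw [hk] at hKlt
  exact ⟨k, by rw [abs_le]; constructor <;> linarith⟩

lemma cosh_gridx_sq (k : ℕ) : (Real.cosh (gridx k))^2 = (k:ℝ)+1 := by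
  have hA := sqrtA_pos k
  have h1 : Real.sqrt ((k:ℝ)+1)^2 = (k:ℝ)+1 := Real.sq_sqrt (by positivity)
  have h2 : Real.sqrt (k:ℝ)^2 = (k:ℝ) := Real.sq_sqrt (Nat.cast_nonneg k)
  have hmul : (Real.sqrt ((k:ℝ)+1) + Real.sqrt k) * (Real.sqrt ((k:ℝ)+1) - Real.sqrt k)
      = 1 := by nlinarith
  rw [gridx, Real.cosh_log hA, inv_eq_of_mul_eq_one_right hmul]
  nlinarith

/-- every point of ℂ is within 4 of a point where cosh² is a natural number. -/
lemma grid_approx (p : ℂ) : ∃ q : ℂ, ‖q - p‖ ≤ 4 ∧ ∃ n : ℕ, Complex.cosh q ^ 2 = n := by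
  obtain ⟨k, hk⟩ := gridx_approx (abs_nonneg p.re)
  set m : ℤ := round (p.im / Real.pi) with hm
  set a : ℝ := if 0 ≤ p.re then gridx k else -gridx k with ha
  refine ⟨(a : ℂ) + ((m * Real.pi : ℝ) : ℂ) * I, ?_, k+1, ?_⟩
  · have hre : |a - p.re| ≤ 2 := by
      rw [ha]
      rcases le_or_gt 0 p.re with h | h
      · rw [if_pos h]
        rwa [_root_.abs_of_nonneg h, abs_sub_comm] at hk
      · rw [if_neg h.not_ge]
        rw [_root_.abs_of_neg h, abs_sub_comm] at hk
        rw [show -gridx k - p.re = -(gridx k - -p.re) by ring, abs_neg]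
        exact hk
    have hπ : (0:ℝ) < Real.pi := Real.pi_pos
    have him : |m * Real.pi - p.im| ≤ 2 := by
      have h1 : |p.im / Real.pi - m| ≤ 1/2 := abs_sub_round (p.im / Real.pi)
      have h2 : (p.im / Real.pi - m) * Real.pi = p.im - m * Real.pi := by
        field_simp
      have h3 : |m * Real.pi - p.im| = |p.im / Real.pi - m| * Real.pi := by
        rw [abs_sub_comm, ← h2, abs_mul, _root_.abs_of_pos hπ]
      rw [h3]
      nlinarith [Real.pi_le_four]
    have hqre : (((a : ℂ) + ((m * Real.pi : ℝ) : ℂ) * I) - p).re = a - p.re := by simp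
    have hqim : (((a : ℂ) + ((m * Real.pi : ℝ) : ℂ) * I) - p).im = m * Real.pi - p.im := by
      simp
    calc ‖((a : ℂ) + ((m * Real.pi : ℝ) : ℂ) * I) - p‖
        ≤ |(((a : ℂ) + ((m * Real.pi : ℝ) : ℂ) * I) - p).re|
          + |(((a : ℂ) + ((m * Real.pi : ℝ) : ℂ) * I) - p).im| :=
          Complex.norm_le_abs_re_add_abs_im _
      _ ≤ 2 + 2 := by rw [hqre, hqim]; exact add_le_add hre him
      _ = 4 := by norm_num
  · have hsinR : Real.sin (m * Real.pi) = 0 := Real.sin_int_mul_pi m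
    have hsin : Complex.sin (((m * Real.pi : ℝ)) : ℂ) = 0 := by
      rw [← Complex.ofReal_sin, hsinR, Complex.ofReal_zero]
    have hcos : Complex.cos (((m * Real.pi : ℝ)) : ℂ) ^ 2 = 1 := by
      have h := Complex.sin_sq_add_cos_sq (((m * Real.pi : ℝ)) : ℂ)
      rw [hsin] at h
      simpa using h
    have hca : Complex.cosh (a:ℂ) ^ 2 = ((k:ℂ)+1) := by
      rw [← Complex.ofReal_cosh, ← Complex.ofReal_pow]
      have : (Real.cosh a)^2 = (k:ℝ)+1 := by
        rw [ha]
        rcases le_or_gt 0 p.re with h | h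
        · rw [if_pos h]; exact cosh_gridx_sq k
        · rw [if_neg h.not_ge, Real.cosh_neg]; exact cosh_gridx_sq k
      rw [this]
      push_cast
      ring
    rw [Complex.cosh_add, Complex.cosh_mul_I, Complex.sinh_mul_I, hsin]
    have : (Complex.cosh (a:ℂ) * Complex.cos (((m * Real.pi : ℝ)) : ℂ)
        + Complex.sinh (a:ℂ) * (0 * I))^2
        = Complex.cosh (a:ℂ)^2 * Complex.cos (((m * Real.pi : ℝ)) : ℂ)^2 := by ring
    rw [this, hcos, hca, mul_one]
    push_cast
    ring


lemma mul_abs_log_le {t : ℝ} (ht : 0 < t) : t * |Real.log t| ≤ 1 + t^2 := by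
  rcases le_or_gt t 1 with h | h
  · rw [abs_of_nonpos (Real.log_nonpos ht.le h), ← Real.log_inv]
    have h2 : Real.log t⁻¹ ≤ t⁻¹ := (Real.log_le_sub_one_of_pos (by positivity)).trans
      (by linarith)
    have h3 : t * Real.log t⁻¹ ≤ t * t⁻¹ := by
      apply mul_le_mul_of_nonneg_left h2 ht.le
    rw [mul_inv_cancel₀ ht.ne'] at h3
    nlinarith
  · rw [abs_of_pos (Real.log_pos h)]
    have := Real.log_le_sub_one_of_pos (lt_trans one_pos h)
    nlinarith

lemma key_at_zero {f : ℂ → ℂ} (hd : DifferentiableOn ℂ f (ball 0 1))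
    (hom : ∀ z ∈ ball (0:ℂ) 1, f z ≠ 0 ∧ f z ≠ 1) :
    ‖deriv f 0‖ ≤ 100000 * (1 + ‖f 0‖^2) := by
  have h0mem : (0:ℂ) ∈ ball (0:ℂ) 1 := mem_ball_self one_pos
  set c : ℂ := 2 * (Real.pi:ℂ) * I with hc
  have hcnorm : ‖c‖ = 2 * Real.pi := by
    rw [hc]; simp [_root_.abs_of_pos Real.pi_pos]
  have hcne : c ≠ 0 := by
    intro h
    have := hcnorm
    rw [h, norm_zero] at this
    have := Real.pi_pos
    linarith
  -- Step 1: logarithm of f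
  obtain ⟨v, hv0, hfv, hvd⟩ := exists_log hd (fun z hz => (hom z hz).1)
  -- Step 2: g = v / (2 π i) avoids all integers
  set g : ℂ → ℂ := fun z => v z / c with hgdef
  have hgd : ∀ z ∈ ball (0:ℂ) 1, HasDerivAt g (deriv f z / f z / c) z :=
    fun z hz => (hvd z hz).div_const c
  have hgdiff : DifferentiableOn ℂ g (ball 0 1) := fun z hz =>
    ((hgd z hz).differentiableAt).differentiableWithinAt
  have hgint : ∀ z ∈ ball (0:ℂ) 1, ∀ n : ℤ, g z ≠ (n:ℂ) := by
    intro z hz n h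
    have hv : v z = (n:ℂ) * c := by
      rw [hgdef] at h
      field_simp at h
      linear_combination h
    have : f z = 1 := by
      rw [hfv z hz, hv, hc]
      exact Complex.exp_int_mul_two_pi_mul_I n
    exact (hom z hz).2 this
  have hgne0 : ∀ z ∈ ball (0:ℂ) 1, g z ≠ 0 := by
    intro z hz
    have := hgint z hz 0
    simpa using this
  have hg1diff : DifferentiableOn ℂ (fun z => g z - 1) (ball 0 1) := by
    intro z hz
    exact (((hgd z hz).sub_const 1).differentiableAt).differentiableWithinAt
  have hgne1 : ∀ z ∈ ball (0:ℂ) 1, g z - 1 ≠ 0 := by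
    intro z hz h
    have := hgint z hz 1
    rw [sub_eq_zero] at h
    simp [h] at this
  -- Step 3: square roots s, t of g and g-1
  obtain ⟨v₁, hv₁0, hgv₁, hv₁d⟩ := exists_log hgdiff hgne0
  obtain ⟨v₂, hv₂0, hgv₂, hv₂d⟩ := exists_log hg1diff hgne1
  set s : ℂ → ℂ := fun z => Complex.exp (v₁ z / 2) with hsdef
  set t : ℂ → ℂ := fun z => Complex.exp (v₂ z / 2) with htdef
  have hs2 : ∀ z ∈ ball (0:ℂ) 1, s z ^ 2 = g z := by
    intro z hz
    rw [hsdef]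
    simp only
    rw [sq, ← Complex.exp_add]
    rw [show v₁ z / 2 + v₁ z / 2 = v₁ z by ring]
    exact (hgv₁ z hz).symm
  have ht2 : ∀ z ∈ ball (0:ℂ) 1, t z ^ 2 = g z - 1 := by
    intro z hz
    rw [htdef]
    simp only
    rw [sq, ← Complex.exp_add]
    rw [show v₂ z / 2 + v₂ z / 2 = v₂ z by ring]
    exact (hgv₂ z hz).symm
  have hsd : ∀ z ∈ ball (0:ℂ) 1,
      HasDerivAt s (Complex.exp (v₁ z / 2) * (deriv g z / g z / 2)) z := by
    intro z hz
    exact ((hv₁d z hz).div_const 2).cexp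
  have htd : ∀ z ∈ ball (0:ℂ) 1,
      HasDerivAt t (Complex.exp (v₂ z / 2) * (deriv (fun w => g w - 1) z / (g z - 1) / 2)) z := by
    intro z hz
    exact ((hv₂d z hz).div_const 2).cexp
  -- Step 4: h = s - t is nonvanishing
  set h : ℂ → ℂ := fun z => s z - t z with hhdef
  have hst1 : ∀ z ∈ ball (0:ℂ) 1, (s z - t z) * (s z + t z) = 1 := by
    intro z hz
    have e : (s z - t z) * (s z + t z) = s z ^ 2 - t z ^ 2 := by ring
    rw [e, hs2 z hz, ht2 z hz]
    ring
  have hhne : ∀ z ∈ ball (0:ℂ) 1, h z ≠ 0 := by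
    intro z hz h0
    have := hst1 z hz
    rw [hhdef] at h0
    simp only at h0
    rw [h0, zero_mul] at this
    exact zero_ne_one this
  have hhd : ∀ z ∈ ball (0:ℂ) 1, HasDerivAt h
      (Complex.exp (v₁ z / 2) * (deriv g z / g z / 2)
        - Complex.exp (v₂ z / 2) * (deriv (fun w => g w - 1) z / (g z - 1) / 2)) z :=
    fun z hz => (hsd z hz).sub (htd z hz)
  have hhdiff : DifferentiableOn ℂ h (ball 0 1) := fun z hz =>
    ((hhd z hz).differentiableAt).differentiableWithinAt
  -- Step 5: H = log h
  obtain ⟨H, hH0, hhH, hHd⟩ := exists_log hhdiff hhne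
  have hHdiff : DifferentiableOn ℂ H (ball 0 1) := fun z hz =>
    ((hHd z hz).differentiableAt).differentiableWithinAt
  -- Step 6: cosh (H z) = s z
  have hcosh : ∀ z ∈ ball (0:ℂ) 1, Complex.cosh (H z) = s z := by
    intro z hz
    have h1 : Complex.exp (H z) = h z := (hhH z hz).symm
    have h2 : Complex.exp (-H z) = s z + t z := by
      rw [Complex.exp_neg, h1, hhdef]
      simp only
      exact inv_eq_of_mul_eq_one_left (by rw [mul_comm]; exact hst1 z hz)
    rw [Complex.cosh, h1, h2, hhdef]
    simp only
    ring
  -- Step 7: bound on deriv H 0 via Landau and the grid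
  obtain ⟨p, hp⟩ := landau hHdiff
  have hHbound : ‖deriv H 0‖ ≤ 640 := by
    by_contra hcon
    push_neg at hcon
    obtain ⟨q, hq4, n, hqn⟩ := grid_approx p
    have hlt : ‖q - p‖ < ‖deriv H 0‖ / 128 := lt_of_le_of_lt hq4 (by linarith)
    obtain ⟨z, hzb, hHz⟩ := hp q hlt
    have e1 : Complex.cosh (H z) ^ 2 = (n:ℂ) := by rw [hHz, hqn]
    rw [hcosh z hzb, hs2 z hzb] at e1
    exact hgint z hzb n (by exact_mod_cast e1)
  -- Step 8: unwind derivatives at 0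
  set D : ℂ := deriv f 0 / f 0 / c with hD
  have hDg : deriv g 0 = D := (hgd 0 h0mem).deriv
  have hDg1 : deriv (fun w => g w - 1) 0 = D := ((hgd 0 h0mem).sub_const 1).deriv
  have hs0 : s 0 ≠ 0 := Complex.exp_ne_zero _
  have ht0 : t 0 ≠ 0 := Complex.exp_ne_zero _
  have hg0 : g 0 ≠ 0 := hgne0 0 h0mem
  have hg10 : g 0 - 1 ≠ 0 := hgne1 0 h0mem
  have hh0 : h 0 ≠ 0 := hhne 0 h0mem
  have hs20 : s 0 ^ 2 = g 0 := hs2 0 h0mem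
  have ht20 : t 0 ^ 2 = g 0 - 1 := ht2 0 h0mem
  have hderivh : deriv h 0 = Complex.exp (v₁ 0 / 2) * (D / g 0 / 2)
      - Complex.exp (v₂ 0 / 2) * (D / (g 0 - 1) / 2) := by
    have := (hhd 0 h0mem).deriv
    rw [hDg, hDg1] at this
    exact this
  have hderivH : deriv H 0 = deriv h 0 / h 0 := (hHd 0 h0mem).deriv
  have hes : Complex.exp (v₁ 0 / 2) = s 0 := rfl
  have het : Complex.exp (v₂ 0 / 2) = t 0 := rfl
  have hstne : s 0 - t 0 ≠ 0 := hh0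
  have hkey : deriv H 0 = -D / (2 * (s 0 * t 0)) := by
    rw [hderivH, hderivh, hes, het]
    have hh0' : h 0 = s 0 - t 0 := rfl
    rw [hh0', ← ht20, ← hs20]
    field_simp [hs0, ht0, hstne]
    ring
  -- norms
  have hnorm1 : ‖D‖ = ‖deriv H 0‖ * (2 * ‖s 0 * t 0‖) := by
    have : D = -(deriv H 0 * (2 * (s 0 * t 0))) := by
      rw [hkey]
      field_simp
    rw [this, norm_neg, norm_mul, norm_mul]
    simp
  have hstn : ‖s 0 * t 0‖ ≤ ‖g 0‖ + 1 := by
    have h1 : ‖s 0 * t 0‖ ^ 2 = ‖g 0‖ * ‖g 0 - 1‖ := by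
      rw [← norm_pow, mul_pow, hs20, ht20, norm_mul]
    have h2 : ‖g 0 - 1‖ ≤ ‖g 0‖ + 1 := by
      calc ‖g 0 - 1‖ ≤ ‖g 0‖ + ‖(1:ℂ)‖ := norm_sub_le _ _
        _ = ‖g 0‖ + 1 := by rw [norm_one]
    nlinarith [norm_nonneg (s 0 * t 0), norm_nonneg (g 0)]
  have hDbound : ‖D‖ ≤ 1280 * (‖g 0‖ + 1) := by
    rw [hnorm1]
    calc ‖deriv H 0‖ * (2 * ‖s 0 * t 0‖) ≤ 640 * (2 * (‖g 0‖ + 1)) := by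
          apply mul_le_mul hHbound (by linarith) (by positivity) (by norm_num)
      _ = 1280 * (‖g 0‖ + 1) := by ring
  -- bound on ‖g 0‖
  have hf0 : f 0 ≠ 0 := (hom 0 h0mem).1
  have hfpos : 0 < ‖f 0‖ := norm_pos_iff.mpr hf0
  have hg0norm : ‖g 0‖ ≤ |Real.log ‖f 0‖| + 4 := by
    have e : g 0 = Complex.log (f 0) / c := by rw [hgdef]; simp only; rw [hv0]
    rw [e, norm_div, hcnorm]
    have h1 : ‖Complex.log (f 0)‖ ≤ |Real.log ‖f 0‖| + Real.pi := by
      calc ‖Complex.log (f 0)‖ ≤ |(Complex.log (f 0)).re| + |(Complex.log (f 0)).im| :=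
            Complex.norm_le_abs_re_add_abs_im _
        _ ≤ |Real.log ‖f 0‖| + Real.pi := by
            rw [Complex.log_re, Complex.log_im]
            have := Complex.abs_arg_le_pi (f 0)
            linarith
    have hπ4 : Real.pi ≤ 4 := Real.pi_le_four
    have h2π : (1:ℝ) ≤ 2 * Real.pi := by nlinarith [Real.pi_gt_three]
    calc ‖Complex.log (f 0)‖ / (2 * Real.pi) ≤ ‖Complex.log (f 0)‖ / 1 := by
          apply div_le_div_of_nonneg_left (norm_nonneg _) one_pos h2π
      _ = ‖Complex.log (f 0)‖ := div_one _
      _ ≤ |Real.log ‖f 0‖| + 4 := by linarith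
  -- final: deriv f 0 = D * c * f 0
  have hderivf : deriv f 0 = D * c * f 0 := by
    rw [hD]
    field_simp
  have hnormf : ‖deriv f 0‖ = ‖D‖ * (2 * Real.pi) * ‖f 0‖ := by
    rw [hderivf, norm_mul, norm_mul, hcnorm]
  set T : ℝ := ‖f 0‖ with hT
  have hlog : T * |Real.log T| ≤ 1 + T^2 := mul_abs_log_le hfpos
  have hTle : T ≤ 1 + T^2 := by nlinarith
  calc ‖deriv f 0‖ = ‖D‖ * (2 * Real.pi) * T := hnormf
    _ ≤ (1280 * (‖g 0‖ + 1)) * (2 * Real.pi) * T := by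
        apply mul_le_mul_of_nonneg_right _ (norm_nonneg _)
        apply mul_le_mul_of_nonneg_right hDbound (by positivity)
    _ ≤ (1280 * ((|Real.log T| + 4) + 1)) * (2 * Real.pi) * T := by
        have hπ : (0:ℝ) < Real.pi := Real.pi_pos
        apply mul_le_mul_of_nonneg_right _ (norm_nonneg _)
        apply mul_le_mul_of_nonneg_right _ (by positivity)
        have := hg0norm
        nlinarith
    _ ≤ (1280 * ((|Real.log T| + 4) + 1)) * 8 * T := by
        have hπ : Real.pi ≤ 4 := Real.pi_le_four
        have hbase : (0:ℝ) ≤ 1280 * ((|Real.log T| + 4) + 1) := by positivity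
        have hT0 : (0:ℝ) ≤ T := norm_nonneg _
        apply mul_le_mul_of_nonneg_right _ hT0
        exact mul_le_mul_of_nonneg_left (by linarith) hbase
    _ = 10240 * (T * |Real.log T|) + 51200 * T := by ring
    _ ≤ 10240 * (1 + T^2) + 51200 * (1 + T^2) := by
        apply add_le_add
        · apply mul_le_mul_of_nonneg_left hlog (by norm_num)
        · apply mul_le_mul_of_nonneg_left hTle (by norm_num)
    _ ≤ 100000 * (1 + T^2) := by nlinarith [sq_nonneg T]



/-- Uniform bound on the invariant spherical derivative for holomorphic functions on
the unit disc omitting 0 and 1. -/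
theorem marty_bound_omitting_zero_one :
    ∃ L : ℝ, 0 ≤ L ∧ ∀ f : ℂ → ℂ, DifferentiableOn ℂ f (ball 0 1) →
      (∀ z ∈ ball (0 : ℂ) 1, f z ≠ 0 ∧ f z ≠ 1) →
      ∀ z ∈ ball (0 : ℂ) 1,
        ‖deriv f z‖ * (1 - ‖z‖ ^ 2) / (1 + ‖f z‖ ^ 2) ≤ L := by
  refine ⟨100000, by norm_num, ?_⟩
  intro f hd hom z hz
  have hz1 : ‖z‖ < 1 := mem_ball_zero_iff.mp hz
  have hz0 : (0:ℝ) ≤ ‖z‖ := norm_nonneg z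
  have h1z : 0 < 1 - ‖z‖^2 := by nlinarith
  set cz : ℂ := (starRingEnd ℂ) z with hcz
  set φ : ℂ → ℂ := fun w => (w + z) / (1 + cz * w) with hφ
  have hczn : ‖cz‖ = ‖z‖ := by rw [hcz]; exact RCLike.norm_conj z
  have hden : ∀ w ∈ ball (0:ℂ) 1, 1 + cz * w ≠ 0 := by
    intro w hw h0
    have hw1 : ‖w‖ < 1 := mem_ball_zero_iff.mp hw
    have h1 : ‖cz * w‖ < 1 := by
      rw [norm_mul, hczn]
      nlinarith [norm_nonneg w]
    have h2 : cz * w = -1 := by linear_combination h0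
    rw [h2] at h1
    simp at h1
  have hkeyid : ∀ w : ℂ, Complex.normSq (1 + cz * w) - Complex.normSq (w + z)
      = (1 - Complex.normSq z) * (1 - Complex.normSq w) := by
    intro w
    simp only [Complex.normSq_apply, Complex.add_re, Complex.add_im, Complex.mul_re,
      Complex.mul_im, Complex.one_re, Complex.one_im, hcz, Complex.conj_re, Complex.conj_im]
    ring
  have hnsq : ∀ x : ℂ, Complex.normSq x = ‖x‖^2 := fun x => by
    rw [Complex.normSq_eq_norm_sq]
  have hmaps : ∀ w ∈ ball (0:ℂ) 1, φ w ∈ ball (0:ℂ) 1 := by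
    intro w hw
    have hw1 : ‖w‖ < 1 := mem_ball_zero_iff.mp hw
    rw [mem_ball_zero_iff, hφ]
    simp only
    rw [norm_div, div_lt_one (norm_pos_iff.mpr (hden w hw))]
    have h2 := hkeyid w
    rw [hnsq, hnsq, hnsq, hnsq] at h2
    have h3 : 0 < (1 - ‖z‖^2) * (1 - ‖w‖^2) := by
      apply mul_pos h1z
      nlinarith [norm_nonneg w]
    nlinarith [norm_nonneg (w+z), norm_nonneg (1+cz*w)]
  have hφdiffAt : ∀ w ∈ ball (0:ℂ) 1, DifferentiableAt ℂ φ w := by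
    intro w hw
    apply DifferentiableAt.div
    · exact (differentiableAt_id.add_const z)
    · exact (differentiableAt_const cz).mul differentiableAt_id |>.const_add 1
    · exact hden w hw
  have hφdiff : DifferentiableOn ℂ φ (ball 0 1) := fun w hw =>
    (hφdiffAt w hw).differentiableWithinAt
  have h0mem : (0:ℂ) ∈ ball (0:ℂ) 1 := mem_ball_self one_pos
  have hφ0 : φ 0 = z := by rw [hφ]; simp
  have hφd : HasDerivAt φ (((1 - ‖z‖^2 : ℝ) : ℂ)) 0 := by
    have h1 : HasDerivAt (fun w : ℂ => w + z) 1 0 := (hasDerivAt_id 0).add_const z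
    have h2 : HasDerivAt (fun w : ℂ => 1 + cz * w) cz 0 := by
      simpa using ((hasDerivAt_id (0:ℂ)).const_mul cz).const_add 1
    have h3 := h1.div h2 (hden 0 h0mem)
    refine h3.congr_deriv ?_
    rw [mul_zero, add_zero, zero_add, one_mul, one_pow, div_one]
    have h4 : z * cz = (Complex.normSq z : ℂ) := Complex.mul_conj z
    rw [h4, hnsq]
    push_cast
    ring
  -- the composed function
  set G : ℂ → ℂ := f ∘ φ with hG
  have hGdiff : DifferentiableOn ℂ G (ball 0 1) :=
    hd.comp hφdiff (fun w hw => hmaps w hw)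
  have hGom : ∀ w ∈ ball (0:ℂ) 1, G w ≠ 0 ∧ G w ≠ 1 := fun w hw =>
    hom (φ w) (hmaps w hw)
  have hfz : HasDerivAt f (deriv f z) (φ 0) := by
    rw [hφ0]
    exact (hd.differentiableAt (isOpen_ball.mem_nhds hz)).hasDerivAt
  have hGd : HasDerivAt G (deriv f z * ((1 - ‖z‖^2 : ℝ) : ℂ)) 0 :=
    HasDerivAt.comp 0 hfz hφd
  have hGval : G 0 = f z := by rw [hG]; simp [hφ0]
  have hGnorm : ‖deriv G 0‖ = ‖deriv f z‖ * (1 - ‖z‖^2) := by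
    rw [hGd.deriv, norm_mul]
    congr 1
    rw [Complex.norm_of_nonneg h1z.le]
  have hkey := key_at_zero hGdiff hGom
  rw [hGnorm, hGval] at hkey
  have hfpos : 0 < 1 + ‖f z‖^2 := by positivity
  rw [div_le_iff₀ hfpos]
  linarith
end

section
/- Let f be holomorphic on the unit disc Δ, with f nonvanishing, and suppose there is a constant L such that |f'(w)|(1 − |w|²)/(1 + |f(w)|²) ≤ L for all w ∈ Δ. Then for every z ∈ Δ with |z| < r < 1, |arctan|f(z)| − arctan|f(0)|| ≤ 2rL/(1 − r²). -/
open Metric Real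

/-- Integrating the spherical derivative bound along a radius. -/
theorem arctan_bound_of_spherical_bound (f : ℂ → ℂ)
    (hf : DifferentiableOn ℂ f (ball 0 1))
    (hnz : ∀ w ∈ ball (0 : ℂ) 1, f w ≠ 0)
    (L : ℝ) (hL : 0 ≤ L)
    (hb : ∀ w ∈ ball (0 : ℂ) 1, ‖deriv f w‖ * (1 - ‖w‖ ^ 2) / (1 + ‖f w‖ ^ 2) ≤ L)
    (r : ℝ) (hr0 : 0 < r) (hr1 : r < 1) (z : ℂ) (hz : ‖z‖ < r) :
    |arctan ‖f z‖ - arctan ‖f 0‖| ≤ 2 * r * L / (1 - r ^ 2) := by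
  have hC : (0:ℝ) < 1 - r ^ 2 := by nlinarith
  set C : ℝ := r * L / (1 - r ^ 2) with hCdef
  have hC0 : 0 ≤ C := by positivity
  -- membership of the radius in the ball
  have hmem : ∀ t ∈ Set.Icc (0:ℝ) 1, ((t:ℂ) * z) ∈ ball (0:ℂ) 1 := by
    intro t ht
    simp only [mem_ball, dist_zero_right]
    have : ‖(t:ℂ) * z‖ = |t| * ‖z‖ := by
      rw [norm_mul, Complex.norm_real, Real.norm_eq_abs]
    rw [this, abs_of_nonneg ht.1]
    have h1 : t * ‖z‖ ≤ ‖z‖ := by nlinarith [norm_nonneg z, ht.2]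
    linarith
  -- the derivative function
  set g' : ℝ → ℝ := fun t =>
    (1 / (1 + ‖f ((t:ℂ) * z)‖ ^ 2)) *
      (1 / (2 * Real.sqrt (‖f ((t:ℂ) * z)‖ ^ 2)) *
        (2 * (inner ℝ (f ((t:ℂ) * z)) (deriv f ((t:ℂ) * z) * z) : ℝ))) with hg'def
  have key : ∀ t ∈ Set.Icc (0:ℝ) 1,
      HasDerivAt (fun s : ℝ => arctan ‖f ((s:ℂ) * z)‖) (g' t) t := by
    intro t ht
    set w : ℂ := (t:ℂ) * z with hw
    have hwmem : w ∈ ball (0:ℂ) 1 := hmem t ht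
    have hfd : HasDerivAt f (deriv f w) w :=
      (hf.differentiableAt (isOpen_ball.mem_nhds hwmem)).hasDerivAt
    have hψ : HasDerivAt (fun u : ℂ => f (u * z)) (deriv f w * z) (t:ℂ) := by
      have := hfd.comp (t:ℂ) ((hasDerivAt_id (t:ℂ)).mul_const z)
      simpa [Function.comp_def] using this
    have hφ : HasDerivAt (fun s : ℝ => f ((s:ℂ) * z)) (deriv f w * z) t :=
      hψ.comp_ofReal
    have hsq : HasDerivAt (fun s : ℝ => ‖f ((s:ℂ) * z)‖ ^ 2)
        (2 * (inner ℝ (f w) (deriv f w * z) : ℝ)) t := hφ.norm_sq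
    have hne : f w ≠ 0 := hnz w hwmem
    have hnn : ‖f w‖ ≠ 0 := norm_ne_zero_iff.mpr hne
    have hsqne : ‖f w‖ ^ 2 ≠ 0 := pow_ne_zero 2 hnn
    have hsqrt : HasDerivAt (fun s : ℝ => Real.sqrt (‖f ((s:ℂ) * z)‖ ^ 2))
        (1 / (2 * Real.sqrt (‖f w‖ ^ 2)) * (2 * (inner ℝ (f w) (deriv f w * z) : ℝ))) t :=
      (Real.hasDerivAt_sqrt hsqne).comp t hsq
    have heq : (fun s : ℝ => Real.sqrt (‖f ((s:ℂ) * z)‖ ^ 2))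
        = fun s : ℝ => ‖f ((s:ℂ) * z)‖ := by
      funext s; rw [Real.sqrt_sq (norm_nonneg _)]
    rw [heq] at hsqrt
    have harctan := (Real.hasDerivAt_arctan ‖f w‖).comp t hsqrt
    simpa [hg'def, hw, Function.comp_def, mul_comm, mul_left_comm, mul_assoc] using harctan
  have bound : ∀ t ∈ Set.Ico (0:ℝ) 1, ‖g' t‖ ≤ C := by
    intro t ht
    have ht' : t ∈ Set.Icc (0:ℝ) 1 := ⟨ht.1, le_of_lt ht.2⟩
    set w : ℂ := (t:ℂ) * z with hw
    have hwmem : w ∈ ball (0:ℂ) 1 := hmem t ht'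
    have hne : f w ≠ 0 := hnz w hwmem
    have hn0 : 0 < ‖f w‖ := norm_pos_iff.mpr hne
    have hsqrt_eq : Real.sqrt (‖f w‖ ^ 2) = ‖f w‖ := Real.sqrt_sq (norm_nonneg _)
    have hip : |(inner ℝ (f w) (deriv f w * z) : ℝ)| ≤ ‖f w‖ * (‖deriv f w‖ * ‖z‖) := by
      calc |(inner ℝ (f w) (deriv f w * z) : ℝ)| ≤ ‖f w‖ * ‖deriv f w * z‖ :=
            abs_real_inner_le_norm _ _
        _ = ‖f w‖ * (‖deriv f w‖ * ‖z‖) := by rw [norm_mul]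
    -- spherical derivative bound
    have hball : ‖w‖ < r := by
      have : ‖w‖ = |t| * ‖z‖ := by
        rw [hw, norm_mul, Complex.norm_real, Real.norm_eq_abs]
      rw [this, abs_of_nonneg ht.1]
      have : t * ‖z‖ ≤ ‖z‖ := by nlinarith [norm_nonneg z, ht.2]
      linarith
    have hw2 : 1 - r ^ 2 ≤ 1 - ‖w‖ ^ 2 := by nlinarith [norm_nonneg w]
    have hw2pos : (0:ℝ) < 1 - ‖w‖ ^ 2 := lt_of_lt_of_le hC hw2
    have hden : (0:ℝ) < 1 + ‖f w‖ ^ 2 := by positivity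
    have hderiv_le : ‖deriv f w‖ * (1 - ‖w‖ ^ 2) ≤ L * (1 + ‖f w‖ ^ 2) := by
      have := hb w hwmem
      rw [div_le_iff₀ hden] at this
      linarith
    -- now estimate
    rw [Real.norm_eq_abs, hg'def]
    simp only [← hw, hsqrt_eq]
    rw [abs_mul, abs_mul]
    have e1 : |1 / (1 + ‖f w‖ ^ 2)| = 1 / (1 + ‖f w‖ ^ 2) := abs_of_pos (by positivity)
    have e2 : |1 / (2 * ‖f w‖)| = 1 / (2 * ‖f w‖) := abs_of_pos (by positivity)
    rw [e1, e2, abs_mul, abs_two]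
    have hzr : ‖z‖ ≤ r := le_of_lt hz
    have hLw : ‖deriv f w‖ ≤ L * (1 + ‖f w‖ ^ 2) / (1 - r ^ 2) := by
      rw [le_div_iff₀ hC]
      nlinarith [norm_nonneg (deriv f w)]
    have hd0 : 0 ≤ ‖deriv f w‖ := norm_nonneg _
    have step : 1 / (1 + ‖f w‖ ^ 2) * (1 / (2 * ‖f w‖) *
        (2 * |(inner ℝ (f w) (deriv f w * z) : ℝ)|)) ≤ ‖deriv f w‖ * ‖z‖ / (1 + ‖f w‖ ^ 2) := by
      have h2 : 2 * |(inner ℝ (f w) (deriv f w * z) : ℝ)| ≤ 2 * (‖f w‖ * (‖deriv f w‖ * ‖z‖)) := by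
        linarith
      have : 1 / (2 * ‖f w‖) * (2 * |(inner ℝ (f w) (deriv f w * z) : ℝ)|) ≤ ‖deriv f w‖ * ‖z‖ := by
        rw [div_mul_eq_mul_div, one_mul, div_le_iff₀ (by positivity : (0:ℝ) < 2 * ‖f w‖)]
        nlinarith
      calc 1 / (1 + ‖f w‖ ^ 2) * (1 / (2 * ‖f w‖) *
            (2 * |(inner ℝ (f w) (deriv f w * z) : ℝ)|))
          ≤ 1 / (1 + ‖f w‖ ^ 2) * (‖deriv f w‖ * ‖z‖) := by
            apply mul_le_mul_of_nonneg_left this (by positivity)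
        _ = ‖deriv f w‖ * ‖z‖ / (1 + ‖f w‖ ^ 2) := by ring
    refine step.trans ?_
    rw [hCdef, div_le_div_iff₀ hden hC]
    have hzn : 0 ≤ ‖z‖ := norm_nonneg z
    have h1 : ‖deriv f w‖ * (1 - r ^ 2) ≤ L * (1 + ‖f w‖ ^ 2) :=
      le_trans (by nlinarith) hderiv_le
    nlinarith [mul_le_mul h1 hzr hzn (by positivity : (0:ℝ) ≤ L * (1 + ‖f w‖ ^ 2))]
  -- mean value inequality
  have main := norm_image_sub_le_of_norm_deriv_le_segment'
    (f := fun s : ℝ => arctan ‖f ((s:ℂ) * z)‖) (f' := g') (C := C)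
    (fun t ht => (key t ht).hasDerivWithinAt) bound 1 (by norm_num)
  simp only [Complex.ofReal_one, one_mul, Complex.ofReal_zero, zero_mul, sub_zero,
    mul_one, Real.norm_eq_abs] at main
  refine main.trans ?_
  rw [hCdef]
  rw [div_le_div_iff₀ hC hC]
  nlinarith [mul_nonneg (mul_nonneg hr0.le hL) hC.le]
end

section
/- (Little Picard Theorem) If f : ℂ → ℂ is entire and there exist two distinct complex numbers a ≠ b with a ∉ range(f) and b ∉ range(f), then f is constant. -/
open Complex Metric Set Nat



theorem exists_primitive_s6 (h : ℂ → ℂ) (hh : Differentiable ℂ h) :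
    ∃ H : ℂ → ℂ, ∀ z, HasDerivAt H (h z) z := by
  set a : ℕ → ℂ := fun n => ((n)! : ℂ)⁻¹ • iteratedDeriv n h 0 with ha
  have hsum : ∀ z : ℂ, HasSum (fun n => a n * z ^ n) (h z) := by
    intro z
    have := hasSum_taylorSeries_of_entire hh 0 z
    simpa [ha, smul_eq_mul, mul_comm, mul_assoc, mul_left_comm] using this
  have key : ∀ R : ℝ, 0 < R → Summable (fun n => ‖a n‖ * R ^ n) := by
    intro R hR
    have h2 : Summable (fun n => a n * ((2*R : ℝ) : ℂ) ^ n) := (hsum _).summable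
    have h0 : Filter.Tendsto (fun n => ‖a n * ((2*R : ℝ) : ℂ) ^ n‖) Filter.atTop (nhds 0) := by
      simpa using h2.tendsto_atTop_zero.norm
    have hb : ∀ᶠ n in Filter.atTop, ‖a n * ((2*R : ℝ) : ℂ) ^ n‖ ≤ 1 :=
      h0.eventually_le_const one_pos
    obtain ⟨N, hN⟩ := hb.exists_forall_of_atTop
    have hle : ∀ n, N ≤ n → ‖a n‖ * R ^ n ≤ (1/2 : ℝ) ^ n := by
      intro n hn
      have h1 := hN n hn
      rw [norm_mul, norm_pow, Complex.norm_real, Real.norm_eq_abs,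
        abs_of_pos (by linarith : (0:ℝ) < 2*R), mul_pow] at h1
      rw [div_pow, one_pow, le_div_iff₀ (by positivity)]
      calc ‖a n‖ * R ^ n * 2 ^ n = ‖a n‖ * (2 ^ n * R ^ n) := by ring
        _ ≤ 1 := h1
    apply Summable.of_norm_bounded_eventually_nat (g := fun n => (1/2:ℝ)^n)
      (summable_geometric_of_lt_one (by norm_num) (by norm_num))
    filter_upwards [Filter.eventually_atTop.2 ⟨N, hle⟩] with n hn
    rw [Real.norm_eq_abs, _root_.abs_of_nonneg (by positivity)]
    exact hn
  set g : ℕ → ℂ → ℂ := fun n z => a n / (n + 1) * z ^ (n + 1) with hg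
  refine ⟨fun z => ∑' n, g n z, fun z => ?_⟩
  set R := ‖z‖ + 1 with hR
  have hRpos : 0 < R := by positivity
  have hder : ∀ n (y : ℂ), HasDerivAt (g n) (a n * y ^ n) y := by
    intro n y
    have : HasDerivAt (fun z : ℂ => z ^ (n+1)) (((n:ℂ)+1) * y ^ n) y := by
      simpa using hasDerivAt_pow (n+1) y
    have := this.const_mul (a n / (n + 1))
    convert this using 1
    · rfl
    · rfl
    have hne : ((n:ℂ) + 1) ≠ 0 := Nat.cast_add_one_ne_zero n
    field_simp
  have hbound : ∀ n (y : ℂ), y ∈ ball (0:ℂ) R → ‖a n * y ^ n‖ ≤ ‖a n‖ * R ^ n := by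
    intro n y hy
    rw [norm_mul, norm_pow]
    have : ‖y‖ ≤ R := (mem_ball_zero_iff.1 hy).le
    gcongr
  have h0 : Summable (fun n => g n 0) := by
    apply summable_of_ne_finset_zero (s := {0})
    intro n hn
    simp [hg, zero_pow (Nat.succ_ne_zero n)]
  have main := hasDerivAt_tsum_of_isPreconnected (key R hRpos) isOpen_ball
    (convex_ball (0:ℂ) R).isPreconnected (fun n y _ => hder n y) hbound
    (mem_ball_self hRpos) h0 (by simp [hR, mem_ball_zero_iff]; linarith [norm_nonneg z])
  rwa [(hsum z).tsum_eq] at main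



theorem differentiable_deriv {f : ℂ → ℂ} (hf : Differentiable ℂ f) :
    Differentiable ℂ (deriv f) := by
  have h2 : ContDiff ℂ (1 + 1) f := hf.contDiff
  rw [contDiff_succ_iff_deriv] at h2
  exact h2.2.2.differentiable one_ne_zero

theorem exists_log_s6 {f : ℂ → ℂ} (hf : Differentiable ℂ f) (h0 : ∀ z, f z ≠ 0) :
    ∃ L : ℂ → ℂ, Differentiable ℂ L ∧ ∀ z, f z = Complex.exp (L z) := by
  have hq : Differentiable ℂ (fun z => deriv f z / f z) :=
    (differentiable_deriv hf).div hf h0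
  obtain ⟨H, hH⟩ := exists_primitive_s6 _ hq
  set P : ℂ → ℂ := fun z => f z * Complex.exp (-H z) with hP
  have hPd : ∀ z, HasDerivAt P 0 z := by
    intro z
    have h1 : HasDerivAt f (deriv f z) z := (hf z).hasDerivAt
    have h2 : HasDerivAt (fun z => Complex.exp (-H z)) (-(deriv f z / f z) * Complex.exp (-H z)) z := by
      have := ((hH z).neg).cexp
      simpa [mul_comm] using this
    have := h1.mul h2
    convert this using 1
    · rfl
    · rfl
    · rfl
    rw [div_eq_mul_inv]
    have := h0 z
    field_simp
    ring
  have hconst : ∀ z, P z = P 0 := by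
    intro z
    apply is_const_of_deriv_eq_zero (fun z => (hPd z).differentiableAt) 
    intro x
    exact (hPd x).deriv
  have hP0 : P 0 ≠ 0 := mul_ne_zero (h0 0) (Complex.exp_ne_zero _)
  obtain ⟨d, hd⟩ : ∃ d, Complex.exp d = P 0 := by
    have : P 0 ∈ Set.range Complex.exp := by rw [Complex.range_exp]; exact hP0
    exact this
  refine ⟨fun z => H z + d, (fun z => ((hH z).differentiableAt).add_const d : Differentiable ℂ _), fun z => ?_⟩
  have h3 : f z * Complex.exp (-H z) = P 0 := hconst z
  have : f z = P 0 * Complex.exp (H z) := by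
    rw [← h3, mul_assoc, ← Complex.exp_add]; simp
  rw [this, ← hd, ← Complex.exp_add, add_comm]



theorem landau_s6 {G : ℂ → ℂ} (hG : Differentiable ℂ G)
    (hG' : Differentiable ℂ (deriv G)) {z₀ : ℂ} (h0 : deriv G z₀ ≠ 0) (ρ : ℝ) :
    ∃ c : ℂ, ball c ρ ⊆ Set.range G := by
  set m₀ : ℝ := ‖deriv G z₀‖ with hm₀
  have hm₀pos : 0 < m₀ := norm_pos_iff.2 h0
  set R : ℝ := ‖z₀‖ + 32 * (|ρ| + 1) / m₀ with hRdef
  have hgap : R - ‖z₀‖ = 32 * (|ρ| + 1) / m₀ := by ring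
  have hgappos : 0 < R - ‖z₀‖ := by rw [hgap]; positivity
  set K : ℂ → ℝ := fun z => (R - ‖z‖) * ‖deriv G z‖ with hK
  have hKcont : Continuous K := by
    exact ((continuous_const.sub continuous_norm).mul hG'.continuous.norm)
  have hz₀mem : z₀ ∈ closedBall (0:ℂ) R := mem_closedBall_zero_iff.2 (by linarith)
  obtain ⟨p, hpmem, hpmax⟩ := (isCompact_closedBall (0:ℂ) R).exists_isMaxOn
    ⟨z₀, hz₀mem⟩ hKcont.continuousOn
  have hKz₀ : 0 < K z₀ := mul_pos hgappos hm₀pos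
  have hKp : K z₀ ≤ K p := hpmax hz₀mem
  have hKppos : 0 < K p := lt_of_lt_of_le hKz₀ hKp
  set m : ℝ := ‖deriv G p‖ with hm
  have hmnonneg : 0 ≤ m := norm_nonneg _
  have hboth := mul_pos_iff.1 hKppos
  have hmpos : 0 < m := by
    rcases hboth with ⟨_, h2⟩ | ⟨_, h2⟩
    · exact h2
    · linarith
  have hRp : 0 < R - ‖p‖ := by
    rcases hboth with ⟨h1, _⟩ | ⟨_, h2⟩
    · exact h1
    · linarith
  set r : ℝ := (R - ‖p‖) / 2 with hr
  have hrpos : 0 < r := by positivity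
  have hKpr : K p = 2 * r * m := by rw [hK]; simp only; rw [hr]; ring
  -- Claim A : derivative bound on ball p r
  have claimA : ∀ z ∈ ball p r, ‖deriv G z‖ ≤ 2 * m := by
    intro z hz
    have hzn : ‖z‖ < ‖p‖ + r := by
      have h1 := mem_ball_iff_norm.1 hz
      calc ‖z‖ = ‖p + (z - p)‖ := by rw [add_sub_cancel]
        _ ≤ ‖p‖ + ‖z - p‖ := norm_add_le _ _
        _ < ‖p‖ + r := by linarith
    have hzR : R - ‖z‖ > r := by rw [hr] at *; linarith
    have hzmem : z ∈ closedBall (0:ℂ) R := by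
      apply mem_closedBall_zero_iff.2
      rw [hr] at hzn; linarith
    have := hpmax hzmem
    have hKz : (R - ‖z‖) * ‖deriv G z‖ ≤ 2 * r * m := by
      rw [← hKpr]; exact this
    nlinarith [norm_nonneg (deriv G z)]
  -- Claim B : Schwarz estimate
  have claimB : ∀ z ∈ ball p r, ‖deriv G z - deriv G p‖ ≤ 4 * m / r * ‖z - p‖ := by
    intro z hz
    have hmaps : MapsTo (fun z => deriv G z - deriv G p) (ball p r)
        (ball ((fun z => deriv G z - deriv G p) p) (4 * m)) := by
      intro w hw
      simp only [sub_self, mem_ball, dist_zero_right, dist_eq_norm]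
      have h1 := claimA w hw
      calc ‖deriv G w - deriv G p - 0‖ ≤ ‖deriv G w‖ + ‖deriv G p‖ := by
            simpa using norm_sub_le (deriv G w) (deriv G p)
        _ ≤ 2 * m + m := by linarith [le_refl m]
        _ < 4 * m := by linarith
    have := Complex.dist_le_div_mul_dist_of_mapsTo_ball
      ((hG'.sub_const (deriv G p)).differentiableOn) (hmaps.mono_right ball_subset_closedBall) hz
    simpa [dist_eq_norm] using this
  -- Claim C : Taylor-type estimate
  have claimC : ∀ z : ℂ, ‖z - p‖ < r →
      ‖G z - G p - deriv G p * (z - p)‖ ≤ 2 * m / r * ‖z - p‖ ^ 2 := by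
    intro z hz
    set v : ℂ := z - p with hv
    have hcont : Continuous (fun s : ℝ => deriv G (p + s * v) * v) := by
      exact ((hG'.continuous.comp (continuous_const.add (Complex.continuous_ofReal.mul continuous_const))).mul continuous_const)
    have hψ : ∀ s : ℝ, HasDerivAt (fun t : ℝ => G (p + t * v)) (deriv G (p + s * v) * v) s := by
      intro s
      have hu : HasDerivAt (fun w : ℂ => G (p + w * v)) (deriv G (p + s * v) * v) (s : ℂ) := by
        have hinner : HasDerivAt (fun w : ℂ => p + w * v) v (s : ℂ) := by
          simpa using ((hasDerivAt_id (s:ℂ)).mul_const v).const_add p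
        have houter : HasDerivAt G (deriv G (p + s * v)) (p + s * v) :=
          (hG _).hasDerivAt
        exact houter.comp (s : ℂ) hinner
      exact hu.comp_ofReal
    have hint : (∫ s in (0:ℝ)..1, deriv G (p + s * v) * v) = G z - G p := by
      have := intervalIntegral.integral_eq_sub_of_hasDerivAt
        (f := fun t : ℝ => G (p + t * v)) (fun s _ => hψ s)
        (hcont.intervalIntegrable 0 1)
      simpa [hv] using this
    have hconst : (∫ _ in (0:ℝ)..1, deriv G p * v) = deriv G p * v := by simp
    have hdiff : G z - G p - deriv G p * v
        = ∫ s in (0:ℝ)..1, (deriv G (p + s * v) - deriv G p) * v := by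
      rw [← hint, ← hconst, ← intervalIntegral.integral_sub
        (hcont.intervalIntegrable 0 1) (intervalIntegrable_const)]
      congr 1
      ext s
      ring
    rw [hdiff]
    have hbound : ∀ s ∈ Set.uIoc (0:ℝ) 1,
        ‖(deriv G (p + s * v) - deriv G p) * v‖ ≤ (4 * m / r * ‖v‖ ^ 2) * s := by
      intro s hs
      rw [Set.uIoc_of_le (by norm_num : (0:ℝ) ≤ 1)] at hs
      obtain ⟨hs0, hs1⟩ := hs
      have hmem : p + s * v ∈ ball p r := by
        simp only [mem_ball, dist_eq_norm]
        have : p + s * v - p = s * v := by ring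
        rw [this, norm_mul]
        have : ‖(s:ℂ)‖ = s := by
          rw [Complex.norm_real, Real.norm_eq_abs, _root_.abs_of_nonneg hs0.le]
        rw [this]
        calc s * ‖v‖ ≤ 1 * ‖v‖ := by
              apply mul_le_mul_of_nonneg_right hs1 (norm_nonneg _)
          _ < r := by simpa using hz
      have h1 := claimB _ hmem
      have h2 : ‖p + s * v - p‖ = s * ‖v‖ := by
        have : p + s * v - p = s * v := by ring
        rw [this, norm_mul, Complex.norm_real, Real.norm_eq_abs,
          _root_.abs_of_nonneg hs0.le]
      rw [h2] at h1
      rw [norm_mul]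
      calc ‖deriv G (p + s * v) - deriv G p‖ * ‖v‖ ≤ (4 * m / r * (s * ‖v‖)) * ‖v‖ := by
            apply mul_le_mul_of_nonneg_right h1 (norm_nonneg _)
        _ = (4 * m / r * ‖v‖ ^ 2) * s := by ring
    have := intervalIntegral.norm_integral_le_abs_of_norm_le
      (g := fun s => (4 * m / r * ‖v‖ ^ 2) * s)
      (f := fun s => (deriv G (p + s * v) - deriv G p) * v) (μ := MeasureTheory.volume)
      (by
        rw [MeasureTheory.ae_restrict_iff' measurableSet_uIoc]
        filter_upwards with s hs using hbound s hs)
      ((continuous_const.mul continuous_id).intervalIntegrable 0 1)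
    have hval : (∫ s in (0:ℝ)..1, (4 * m / r * ‖v‖ ^ 2) * s) = 2 * m / r * ‖v‖ ^ 2 := by
      rw [intervalIntegral.integral_const_mul, integral_id]
      ring
    calc ‖∫ s in (0:ℝ)..1, (deriv G (p + s * v) - deriv G p) * v‖
        ≤ |∫ s in (0:ℝ)..1, (4 * m / r * ‖v‖ ^ 2) * s| := this
      _ = 2 * m / r * ‖v‖ ^ 2 := by
          rw [hval, _root_.abs_of_nonneg (by positivity)]
  -- Claim D : lower bound on a circle
  have claimD : ∀ z : ℂ, ‖z - p‖ = r / 4 → m * r / 8 ≤ ‖G z - G p‖ := by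
    intro z hz
    have h1 := claimC z (by rw [hz]; linarith)
    rw [hz] at h1
    have h2 : ‖deriv G p * (z - p)‖ = m * (r / 4) := by
      rw [norm_mul, hz, ← hm]
    have h3 := norm_sub_le (G z - G p) (G z - G p - deriv G p * (z - p))
    rw [show G z - G p - (G z - G p - deriv G p * (z - p)) = deriv G p * (z - p)
      from by ring] at h3
    have h5 : 2 * m / r * (r / 4) ^ 2 = m * r / 8 := by
      field_simp
      ring
    rw [h5] at h1
    rw [h2] at h3
    linarith
  -- Claim E : far from omitted values
  have claimE : ∀ w : ℂ, w ∉ Set.range G → m * r / 16 ≤ ‖w - G p‖ := by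
    intro w hw
    by_contra hlt
    push_neg at hlt
    have hne : ∀ z, G z - w ≠ 0 := by
      intro z h
      exact hw ⟨z, by rwa [sub_eq_zero] at h⟩
    set F : ℂ → ℂ := fun z => (G z - w)⁻¹ with hF
    have hFd : Differentiable ℂ F := ((hG.sub_const w).inv hne)
    have h16pos : (0:ℝ) < 16 / (m * r) := by positivity
    have hfr : ∀ z ∈ frontier (ball p (r / 4)), ‖F z‖ ≤ 16 / (m * r) := by
      intro z hzf
      rw [frontier_ball p (ne_of_gt (by positivity : (0:ℝ) < r / 4))] at hzf
      have hzs : ‖z - p‖ = r / 4 := by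
        simpa [dist_eq_norm] using hzf
      have hD := claimD z hzs
      have hlow : m * r / 16 ≤ ‖G z - w‖ := by
        have h6 : ‖G z - G p‖ ≤ ‖G z - w‖ + ‖w - G p‖ := by
          rw [show G z - G p = (G z - w) + (w - G p) from by ring]
          exact norm_add_le _ _
        linarith
      have hpos16 : (0:ℝ) < m * r / 16 := by positivity
      rw [hF]
      simp only [norm_inv]
      have hinv : ‖G z - w‖⁻¹ ≤ (m * r / 16)⁻¹ := by gcongr
      calc ‖G z - w‖⁻¹ ≤ (m * r / 16)⁻¹ := hinv
        _ = 16 / (m * r) := by field_simp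
    have hmm := Complex.norm_le_of_forall_mem_frontier_norm_le (isBounded_ball)
      hFd.diffContOnCl hfr (subset_closure (mem_ball_self (by positivity : (0:ℝ) < r / 4)))
    have hFp : ‖F p‖ = ‖w - G p‖⁻¹ := by
      rw [hF]
      simp only [norm_inv, norm_sub_rev]
    rw [hFp] at hmm
    have hwpos : 0 < ‖w - G p‖ := by
      rw [norm_pos_iff, sub_ne_zero]
      intro h
      exact hw ⟨p, h.symm⟩
    rw [inv_le_comm₀ hwpos h16pos] at hmm
    have : (16 / (m * r))⁻¹ = m * r / 16 := by field_simp
    rw [this] at hmm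
    linarith
  -- conclusion
  have hKz₀val : K z₀ = 32 * (|ρ| + 1) := by
    show (R - ‖z₀‖) * ‖deriv G z₀‖ = 32 * (|ρ| + 1)
    rw [hgap, ← hm₀]
    field_simp
  have hmr : 32 * (|ρ| + 1) ≤ 2 * r * m := by
    rw [← hKz₀val, ← hKpr]; exact hKp
  refine ⟨G p, fun w hwball => ?_⟩
  by_contra hw
  have hE := claimE w hw
  have hdist : ‖w - G p‖ < ρ := by
    simpa [dist_eq_norm] using (mem_ball.1 hwball)
  have habs : ρ ≤ |ρ| := le_abs_self ρ
  nlinarith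



noncomputable def gridA : ℕ → ℝ := fun n => Real.log (Real.sqrt (n+1) + Real.sqrt n)

lemma sqrt_add_pos (n : ℕ) : 0 < Real.sqrt (n+1) + Real.sqrt n := by
  have : 0 < Real.sqrt (n+1) := Real.sqrt_pos.2 (by positivity)
  have := Real.sqrt_nonneg (n:ℝ)
  linarith

def IsGrid (w : ℂ) : Prop :=
  ∃ n : ℕ, ∃ m : ℤ, w = (gridA n : ℝ) + (m * Real.pi : ℝ) * I ∨
    w = -(gridA n : ℝ) + (m * Real.pi : ℝ) * I

-- the key exp computation
lemma exp_grid (n : ℕ) (m : ℤ) (w : ℂ)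
    (hw : w = (gridA n : ℝ) + (m * Real.pi : ℝ) * I ∨
      w = -(gridA n : ℝ) + (m * Real.pi : ℝ) * I) :
    Complex.exp w + (Complex.exp w)⁻¹
      = 2 * (Real.sqrt (n+1) : ℂ) * Complex.exp ((m * Real.pi : ℝ) * I) ∧
    Complex.exp ((m * Real.pi : ℝ) * I) ^ 2 = 1 := by
  set A : ℝ := Real.sqrt (n+1) + Real.sqrt n with hA
  have hApos := sqrt_add_pos n
  set ε : ℂ := Complex.exp ((m * Real.pi : ℝ) * I) with hε
  have hεsq : ε ^ 2 = 1 := by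
    rw [hε, ← Complex.exp_nat_mul]
    rw [show (2:ℕ) * (((m * Real.pi : ℝ) : ℂ) * I) = (m:ℂ) * (2 * Real.pi * I) from by
      push_cast; ring]
    exact Complex.exp_int_mul_two_pi_mul_I m
  have hεne : ε ≠ 0 := Complex.exp_ne_zero _
  have hεinv : ε⁻¹ = ε := by
    rw [inv_eq_of_mul_eq_one_right (by linear_combination hεsq : ε * ε = 1)]
  have hexpa : Complex.exp ((gridA n : ℝ) : ℂ) = (A : ℂ) := by
    rw [← Complex.ofReal_exp]
    congr 1
    exact Real.exp_log hApos
  have hAinv : (A:ℂ)⁻¹ = ((Real.sqrt (n+1) - Real.sqrt n : ℝ) : ℂ) := by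
    have hmul : (A:ℝ) * (Real.sqrt (n+1) - Real.sqrt n) = 1 := by
      have h1 : Real.sqrt (n+1) ^ 2 = (n:ℝ)+1 := Real.sq_sqrt (by positivity)
      have h2 : Real.sqrt n ^ 2 = (n:ℝ) := Real.sq_sqrt (by positivity)
      rw [hA]
      nlinarith
    have : (A:ℂ) * ((Real.sqrt (n+1) - Real.sqrt n : ℝ) : ℂ) = 1 := by
      rw [← Complex.ofReal_mul, hmul, Complex.ofReal_one]
    exact inv_eq_of_mul_eq_one_right this
  have hsum : (A:ℂ) + (A:ℂ)⁻¹ = 2 * (Real.sqrt (n+1) : ℂ) := by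
    rw [hAinv, hA]
    push_cast
    ring
  refine ⟨?_, hεsq⟩
  have hAne : (A:ℂ) ≠ 0 := by
    rw [hA]
    exact_mod_cast ne_of_gt hApos
  rcases hw with hw | hw
  · rw [hw, Complex.exp_add, hexpa, mul_inv, hεinv]
    rw [← hsum]
    ring
  · rw [hw, show -((gridA n : ℝ):ℂ) + ((m * Real.pi : ℝ):ℂ) * I
        = -(((gridA n : ℝ)):ℂ) + ((m * Real.pi : ℝ)) * I from rfl,
      Complex.exp_add, Complex.exp_neg, hexpa, mul_inv, hεinv, inv_inv]
    rw [← hsum]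
    ring




lemma gridA_zero : gridA 0 = 0 := by simp [gridA]


lemma gridA_gap (n : ℕ) : gridA (n+1) - gridA n ≤ Real.log (1 + Real.sqrt 2) := by
  have hB := sqrt_add_pos n
  have hA := sqrt_add_pos (n+1)
  have h2 : (0:ℝ) < 1 + Real.sqrt 2 := by positivity
  have key : Real.sqrt (((n+1):ℕ)+1) + Real.sqrt ((n+1):ℕ)
      ≤ (1 + Real.sqrt 2) * (Real.sqrt (n+1) + Real.sqrt n) := by
    have h3 : Real.sqrt (((n+1):ℕ)+1) ≤ Real.sqrt 2 * Real.sqrt ((n:ℝ)+1) := by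
      rw [← Real.sqrt_mul (by norm_num : (0:ℝ) ≤ 2)]
      apply Real.sqrt_le_sqrt
      push_cast
      nlinarith [Nat.cast_nonneg (α := ℝ) n]
    have h4 : (0:ℝ) ≤ Real.sqrt n := Real.sqrt_nonneg _
    have h5 : (0:ℝ) ≤ Real.sqrt 2 := Real.sqrt_nonneg _
    push_cast at *
    nlinarith [Real.sqrt_nonneg ((n:ℝ)+1)]
  have := Real.log_le_log hA key
  rw [Real.log_mul (ne_of_gt h2) (ne_of_gt hB)] at this
  unfold gridA
  push_cast at this ⊢
  linarith
lemma gridA_gap_lt_one (n : ℕ) : gridA (n+1) - gridA n < 1 := by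
  have h := gridA_gap n
  have h2 : Real.log (1 + Real.sqrt 2) < 1 := by
    have hs : Real.sqrt 2 < 1.5 := by
      rw [show (1.5:ℝ) = Real.sqrt (1.5^2) from (Real.sqrt_sq (by norm_num)).symm]
      apply Real.sqrt_lt_sqrt (by norm_num)
      norm_num
    have he := Real.exp_one_gt_d9
    calc Real.log (1 + Real.sqrt 2) < Real.log (Real.exp 1) := by
          apply Real.log_lt_log (by positivity)
          linarith
      _ = 1 := Real.log_exp 1
  linarith

lemma gridA_unbounded : ∀ x : ℝ, ∃ n : ℕ, x < gridA n := by
  intro x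
  obtain ⟨n, hn⟩ := exists_nat_gt ((Real.exp x)^2)
  refine ⟨n, ?_⟩
  unfold gridA
  have h1 : Real.exp x < Real.sqrt (n+1) := by
    rw [show Real.exp x = Real.sqrt ((Real.exp x)^2) from (Real.sqrt_sq (Real.exp_pos x).le).symm]
    apply Real.sqrt_lt_sqrt (by positivity)
    linarith
  calc x = Real.log (Real.exp x) := (Real.log_exp x).symm
    _ < Real.log (Real.sqrt (n+1) + Real.sqrt n) := by
        apply Real.log_lt_log (Real.exp_pos x)
        have := Real.sqrt_nonneg (n:ℝ)
        linarith

lemma gridA_dense (x : ℝ) (hx : 0 ≤ x) : ∃ n : ℕ, |x - gridA n| < 1 := by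
  have hex : ∃ k : ℕ, x < gridA k := gridA_unbounded x
  classical
  set k := Nat.find hex with hk
  have hklt : x < gridA k := Nat.find_spec hex
  have hkpos : k ≠ 0 := by
    intro h
    rw [h, gridA_zero] at hklt
    linarith
  obtain ⟨j, hj⟩ := Nat.exists_eq_succ_of_ne_zero hkpos
  have hklt' : x < gridA (j+1) := by rw [← Nat.succ_eq_add_one, ← hj]; exact hklt
  have hle : ¬ x < gridA j := by
    rw [hk] at hj
    exact Nat.find_min hex (by omega)
  push_neg at hle
  refine ⟨j, ?_⟩
  rw [abs_lt]
  have := gridA_gap_lt_one j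
  constructor <;> linarith


lemma grid_dense (c : ℂ) : ∃ w : ℂ, IsGrid w ∧ dist w c < 2 := by
  set x := c.re with hx
  set y := c.im with hy
  set m : ℤ := round (y / Real.pi) with hm
  have hpi := Real.pi_pos
  have him : |y - m * Real.pi| ≤ Real.pi / 2 := by
    have h1 : |y / Real.pi - m| ≤ 1 / 2 := abs_sub_round (y / Real.pi)
    have h2 : |y - m * Real.pi| = Real.pi * |y / Real.pi - m| := by
      rw [show Real.pi * |y / Real.pi - (m:ℝ)| = |Real.pi| * |y / Real.pi - (m:ℝ)|
        from by rw [abs_of_pos hpi], ← abs_mul]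
      congr 1
      field_simp
    rw [h2]
    calc Real.pi * |y / Real.pi - m| ≤ Real.pi * (1/2) := by
          apply mul_le_mul_of_nonneg_left h1 hpi.le
      _ = Real.pi / 2 := by ring
  have him2 : (y - m * Real.pi)^2 ≤ (Real.pi / 2)^2 := by
    rw [← _root_.sq_abs]
    apply pow_le_pow_left₀ (abs_nonneg _) him 2
  have hpisq : (Real.pi / 2)^2 < 2.481 := by
    have := Real.pi_lt_d2
    nlinarith [Real.pi_pos]
  have key : ∀ u : ℝ, |(-x) - u| < 1 ∨ |x - u| < 1 → ∃ w : ℂ,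
      (w = (u:ℝ) + (m * Real.pi : ℝ) * I ∨ w = -(u:ℝ) + (m * Real.pi : ℝ) * I) ∧ dist w c < 2 := by
    intro u hu
    rcases hu with hu | hu
    · refine ⟨-(u:ℝ) + (m * Real.pi : ℝ) * I, Or.inr rfl, ?_⟩
      rw [Complex.dist_eq, Complex.norm_def, Complex.normSq_apply]
      have hre : ((-(u:ℝ) + (m * Real.pi : ℝ) * I) - c).re = -u - x := by simp [hx]
      have himm : ((-(u:ℝ) + (m * Real.pi : ℝ) * I) - c).im = m * Real.pi - y := by simp [hy]
      rw [hre, himm]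
      rw [show (2:ℝ) = Real.sqrt 4 from by
        rw [show (4:ℝ) = 2^2 by norm_num, Real.sqrt_sq (by norm_num : (0:ℝ) ≤ 2)]]
      apply Real.sqrt_lt_sqrt
        (by nlinarith [mul_self_nonneg (-u - x), mul_self_nonneg ((m:ℝ)*Real.pi - y)])
      have h7 : (-u - x)^2 < 1 := by
        rw [show (-u - x)^2 = ((-x) - u)^2 from by ring]
        nlinarith [hu, abs_nonneg ((-x) - u), _root_.sq_abs ((-x) - u),
          mul_self_nonneg (1 - |(-x) - u|)]
      have h8 : (m * Real.pi - y)^2 ≤ (Real.pi/2)^2 := by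
        rw [show (m * Real.pi - y)^2 = (y - m*Real.pi)^2 from by ring]
        exact him2
      nlinarith
    · refine ⟨(u:ℝ) + (m * Real.pi : ℝ) * I, Or.inl rfl, ?_⟩
      rw [Complex.dist_eq, Complex.norm_def, Complex.normSq_apply]
      have hre : (((u:ℝ) + (m * Real.pi : ℝ) * I) - c).re = u - x := by simp [hx]
      have himm : (((u:ℝ) + (m * Real.pi : ℝ) * I) - c).im = m * Real.pi - y := by simp [hy]
      rw [hre, himm]
      rw [show (2:ℝ) = Real.sqrt 4 from by
        rw [show (4:ℝ) = 2^2 by norm_num, Real.sqrt_sq (by norm_num : (0:ℝ) ≤ 2)]]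
      apply Real.sqrt_lt_sqrt
        (by nlinarith [mul_self_nonneg (u - x), mul_self_nonneg ((m:ℝ)*Real.pi - y)])
      have h7 : (u - x)^2 < 1 := by
        rw [show (u - x)^2 = (x - u)^2 from by ring]
        nlinarith [hu, abs_nonneg (x - u), _root_.sq_abs (x - u),
          mul_self_nonneg (1 - |x - u|)]
      have h8 : (m * Real.pi - y)^2 ≤ (Real.pi/2)^2 := by
        rw [show (m * Real.pi - y)^2 = (y - m*Real.pi)^2 from by ring]
        exact him2
      nlinarith
  rcases le_or_gt 0 x with hx0 | hx0
  · obtain ⟨n, hn⟩ := gridA_dense x hx0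
    obtain ⟨w, hw1, hw2⟩ := key (gridA n) (Or.inr hn)
    exact ⟨w, ⟨n, m, hw1⟩, hw2⟩
  · obtain ⟨n, hn⟩ := gridA_dense (-x) (by linarith)
    obtain ⟨w, hw1, hw2⟩ := key (gridA n) (Or.inl hn)
    exact ⟨w, ⟨n, m, hw1⟩, hw2⟩

/-- Little Picard theorem: an entire function omitting two distinct values is constant. -/
theorem little_picard (f : ℂ → ℂ) (hf : Differentiable ℂ f)
    (a b : ℂ) (hab : a ≠ b)
    (ha : ∀ z : ℂ, f z ≠ a) (hb : ∀ z : ℂ, f z ≠ b) :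
    ∃ c : ℂ, ∀ z : ℂ, f z = c := by
  have hba : (b - a) ≠ 0 := sub_ne_zero.2 (Ne.symm hab)
  set g : ℂ → ℂ := fun z => (f z - a) / (b - a) with hgdef
  have hgd : Differentiable ℂ g := (hf.sub_const a).div_const _
  have hg0 : ∀ z, g z ≠ 0 := by
    intro z h
    rw [hgdef] at h
    simp only [div_eq_zero_iff, sub_eq_zero] at h
    rcases h with h | h
    · exact ha z h
    · exact hab h.symm
  have hg1 : ∀ z, g z ≠ 1 := by
    intro z h
    rw [hgdef] at h
    simp only at h
    rw [div_eq_one_iff_eq hba] at h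
    exact hb z (by linear_combination h)
  obtain ⟨L, hLd, hLg⟩ := exists_log_s6 hgd hg0
  have hπI : (2 * (Real.pi:ℂ) * I) ≠ 0 := by
    simp [Real.pi_ne_zero, Complex.I_ne_zero]
  set h : ℂ → ℂ := fun z => L z / (2 * Real.pi * I) with hhdef
  have hhd : Differentiable ℂ h := hLd.div_const _
  have hint : ∀ (z : ℂ) (k : ℤ), h z ≠ (k : ℂ) := by
    intro z k hk
    have hL : L z = (k:ℂ) * (2 * Real.pi * I) := by
      rw [hhdef] at hk
      field_simp at hk
      rw [hk, mul_comm]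
    have : g z = 1 := by
      rw [hLg z, hL]
      exact Complex.exp_int_mul_two_pi_mul_I k
    exact hg1 z this
  have hh0 : ∀ z, h z ≠ 0 := fun z h0 => hint z 0 (by simpa using h0)
  have hh1 : ∀ z, h z - 1 ≠ 0 := fun z h1 => hint z 1 (by
    have := sub_eq_zero.1 h1
    simpa using this)
  obtain ⟨L₂, hL₂d, hL₂⟩ := exists_log_s6 hhd hh0
  obtain ⟨L₃, hL₃d, hL₃⟩ := exists_log_s6 (hhd.sub_const 1) hh1
  set s : ℂ → ℂ := fun z => Complex.exp (L₂ z / 2) with hsdef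
  set t : ℂ → ℂ := fun z => Complex.exp (L₃ z / 2) with htdef
  have hs2 : ∀ z, s z ^ 2 = h z := by
    intro z
    rw [hsdef]
    simp only
    rw [sq, ← Complex.exp_add]
    rw [show L₂ z / 2 + L₂ z / 2 = L₂ z from by ring]
    exact (hL₂ z).symm
  have ht2 : ∀ z, t z ^ 2 = h z - 1 := by
    intro z
    rw [htdef]
    simp only
    rw [sq, ← Complex.exp_add]
    rw [show L₃ z / 2 + L₃ z / 2 = L₃ z from by ring]
    exact (hL₃ z).symm
  set H : ℂ → ℂ := fun z => s z - t z with hHdef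
  have hprod : ∀ z, H z * (s z + t z) = 1 := by
    intro z
    rw [hHdef]
    simp only
    linear_combination (hs2 z) - (ht2 z)
  have hH0 : ∀ z, H z ≠ 0 := fun z => left_ne_zero_of_mul_eq_one (hprod z)
  have hHinv : ∀ z, (H z)⁻¹ = s z + t z := fun z => inv_eq_of_mul_eq_one_right (hprod z)
  have h2s : ∀ z, H z + (H z)⁻¹ = 2 * s z := by
    intro z
    rw [hHinv z, hHdef]
    simp only
    ring
  have hHd : Differentiable ℂ H := ((hL₂d.div_const 2).cexp).sub ((hL₃d.div_const 2).cexp)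
  obtain ⟨G, hGd, hGH⟩ := exists_log_s6 hHd hH0
  -- G avoids the grid
  have hGgrid : ∀ z w, IsGrid w → G z ≠ w := by
    rintro z w ⟨n, m, hw⟩ hGz
    obtain ⟨hsum, hεsq⟩ := exp_grid n m w hw
    have hHz : H z = Complex.exp w := by rw [← hGz, ← hGH]
    have hs : 2 * s z = 2 * (Real.sqrt (n+1) : ℂ) * Complex.exp ((m * Real.pi : ℝ) * I) := by
      rw [← h2s z, hHz]
      exact hsum
    have hsz : s z = (Real.sqrt (n+1) : ℂ) * Complex.exp (((m * Real.pi : ℝ):ℂ) * I) := by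
      apply mul_left_cancel₀ (two_ne_zero : (2:ℂ) ≠ 0)
      linear_combination hs
    have hhz : h z = ((n:ℂ) + 1) := by
      rw [← hs2 z, hsz]
      have hr : ((Real.sqrt (n+1) : ℝ):ℂ) ^ 2 = (n:ℂ) + 1 := by
        rw [← Complex.ofReal_pow, Real.sq_sqrt (by positivity : (0:ℝ) ≤ (n:ℝ)+1)]
        push_cast
        ring
      rw [mul_pow, hr, hεsq, mul_one]
    exact hint z (n+1) (by rw [hhz]; push_cast; ring)
  -- hence deriv G vanishes everywhere
  have hderiv : ∀ z₀, deriv G z₀ = 0 := by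
    intro z₀
    by_contra h0
    obtain ⟨c, hc⟩ := landau_s6 hGd (differentiable_deriv hGd) h0 2
    obtain ⟨w, hwgrid, hwdist⟩ := grid_dense c
    obtain ⟨z, hz⟩ := hc (mem_ball.2 hwdist)
    exact hGgrid z w hwgrid hz
  have hGconst : ∀ z, G z = G 0 := by
    intro z
    apply is_const_of_deriv_eq_zero hGd hderiv
  refine ⟨f 0, fun z => ?_⟩
  have hHc : H z = H 0 := by rw [hGH z, hGH 0, hGconst z]
  have hsc : s z = s 0 := by
    have h4 := h2s z
    rw [hHc, h2s 0] at h4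
    apply mul_left_cancel₀ (two_ne_zero : (2:ℂ) ≠ 0)
    linear_combination - h4
  have hhc : h z = h 0 := by rw [← hs2 z, ← hs2 0, hsc]
  have hLc : L z = L 0 := by
    have : L z / (2 * Real.pi * I) = L 0 / (2 * Real.pi * I) := hhc
    field_simp at this
    exact this
  have hgc : g z = g 0 := by rw [hLg z, hLg 0, hLc]
  have h3 : (f z - a) / (b - a) = (f 0 - a) / (b - a) := hgc
  field_simp at h3
  linear_combination h3
end
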